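/- arXiv:2605.15504 — 3 statements merged into one kernel-verified Lean document; each statement's English description precedes it below -/
import Mathlib

section
/- Let d ≥ 2, let μ be a probability measure on the Euclidean space ℝ^d with finite first moment, let w̄ ∈ ℝ^d, and let v be a unit vector. Suppose that for every linear isometry equivalence f of ℝ^d with f(v) = v, the affine map x ↦ w̄ + f(x − w̄) pushes μ forward to itself. Let H = {x : ⟪v, x − w̄⟫ ≥ 0} and assume μ(H) > 0. Then the conditional mean m = (μ(H))⁻¹ • ∫_{H} x dμ satisfies m = w̄ + ⟪v, m − w̄⟫ • v with ⟪v, m − w̄⟫ ≥ 0; and if additionally μ({x : ⟪v, x − w̄⟫ > 0}) > 0, then ⟪v, m − w̄⟫ > 0. -/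
open MeasureTheory

/-- Key step in the proof of Theorem 3.3: for a probability measure `μ` on
`ℝ^d` (`d ≥ 2`) with finite first moment that is invariant under every rigid
rotation/reflection fixing `wbar` and the direction `v`, the conditional mean
`m` of `μ` on the halfspace `H = {x : ⟪v, x - wbar⟫ ≥ 0}` lies on the ray
`wbar + α v` with `α = ⟪v, m - wbar⟫ ≥ 0`, and `α > 0` if the open halfspace
has positive mass. -/
theorem stmt_3 (d : ℕ) (hd : 2 ≤ d)
    (μ : Measure (EuclideanSpace ℝ (Fin d))) [IsProbabilityMeasure μ]
    (hint : Integrable (fun x => x) μ)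
    (wbar : EuclideanSpace ℝ (Fin d)) (v : EuclideanSpace ℝ (Fin d))
    (hv : ‖v‖ = 1)
    (hsym : ∀ f : EuclideanSpace ℝ (Fin d) ≃ₗᵢ[ℝ] EuclideanSpace ℝ (Fin d),
      f v = v → Measure.map (fun x => wbar + f (x - wbar)) μ = μ)
    (H : Set (EuclideanSpace ℝ (Fin d)))
    (hH : H = {x | 0 ≤ (inner ℝ v (x - wbar) : ℝ)})
    (hHpos : 0 < μ H)
    (m : EuclideanSpace ℝ (Fin d))
    (hm : m = ((μ H).toReal)⁻¹ • ∫ x in H, x ∂μ) :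
    (m = wbar + (inner ℝ v (m - wbar) : ℝ) • v ∧ 0 ≤ (inner ℝ v (m - wbar) : ℝ)) ∧
    (0 < μ {x | 0 < (inner ℝ v (x - wbar) : ℝ)} →
      0 < (inner ℝ v (m - wbar) : ℝ)) := by
  classical
  have hc : (0:ℝ) < (μ H).toReal := ENNReal.toReal_pos hHpos.ne' (measure_ne_top μ H)
  have hgcont : Continuous fun x : EuclideanSpace ℝ (Fin d) => (inner ℝ v (x - wbar) : ℝ) :=
    (continuous_const.inner (continuous_id.sub continuous_const))
  have hHmeas : MeasurableSet H := by
    rw [hH]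
    exact (isClosed_le continuous_const hgcont).measurableSet
  have hint' : Integrable (fun x : EuclideanSpace ℝ (Fin d) => x - wbar) μ :=
    hint.sub (integrable_const wbar)
  set I : EuclideanSpace ℝ (Fin d) := ∫ x in H, (x - wbar) ∂μ with hIdef
  -- invariance of I under isometries fixing v
  have key : ∀ f : EuclideanSpace ℝ (Fin d) ≃ₗᵢ[ℝ] EuclideanSpace ℝ (Fin d),
      f v = v → f I = I := by
    intro f hf
    have hmap := hsym f hf
    have hTmeas : AEMeasurable (fun x : EuclideanSpace ℝ (Fin d) => wbar + f (x - wbar)) μ :=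
      (continuous_const.add
        (f.continuous.comp (continuous_id.sub continuous_const))).measurable.aemeasurable
    have hpre : (fun x : EuclideanSpace ℝ (Fin d) => wbar + f (x - wbar)) ⁻¹' H = H := by
      ext x
      simp only [Set.mem_preimage, hH, Set.mem_setOf_eq, add_sub_cancel_left]
      rw [show (inner ℝ v (f (x - wbar)) : ℝ) = inner ℝ v (x - wbar) by
        conv_lhs => rw [← hf]
        exact f.inner_map_map v (x - wbar)]
    have step1 : I = ∫ x in H, (x - wbar)
        ∂(Measure.map (fun x : EuclideanSpace ℝ (Fin d) => wbar + f (x - wbar)) μ) := by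
      rw [hmap]
    have step2 : (∫ x in H, (x - wbar)
        ∂(Measure.map (fun x : EuclideanSpace ℝ (Fin d) => wbar + f (x - wbar)) μ))
        = ∫ x in H, f (x - wbar) ∂μ := by
      rw [setIntegral_map hHmeas
        ((by fun_prop :
          AEStronglyMeasurable (fun x : EuclideanSpace ℝ (Fin d) => x - wbar)
            (Measure.map (fun x => wbar + f (x - wbar)) μ))) hTmeas, hpre]
      simp only [add_sub_cancel_left]
    have step3 : ∫ x in H, f (x - wbar) ∂μ = f I :=
      f.toLinearIsometry.integral_comp_comm (fun x => x - wbar)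
    exact (step1.trans (step2.trans step3)).symm
  -- inner ℝ u I = 0 for u orthogonal to v
  have horth : ∀ u : EuclideanSpace ℝ (Fin d),
      (inner ℝ u v : ℝ) = 0 → (inner ℝ u I : ℝ) = 0 := by
    intro u hu
    by_cases hu0 : u = 0
    · simp [hu0]
    · set K : Submodule ℝ (EuclideanSpace ℝ (Fin d)) := (ℝ ∙ u)ᗮ with hK
      have hvK : v ∈ K := by
        rw [hK, Submodule.mem_orthogonal_singleton_iff_inner_right]
        exact hu
      have huK : u ∈ Kᗮ :=
        Submodule.le_orthogonal_orthogonal _ (Submodule.mem_span_singleton_self u)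
      have hfI := key (Submodule.reflection K) (Submodule.reflection_mem_subspace_eq_self hvK)
      have hfu : Submodule.reflection K u = -u := Submodule.reflection_mem_subspace_orthogonalComplement_eq_neg huK
      have h2 : (inner ℝ u I : ℝ) = inner ℝ (Submodule.reflection K u) (Submodule.reflection K I) :=
        ((Submodule.reflection K).inner_map_map u I).symm
      rw [hfu, hfI, inner_neg_left] at h2
      linarith
  -- I = ⟪v, I⟫ • v
  have hIv : I = (inner ℝ v I : ℝ) • v := by
    set J : EuclideanSpace ℝ (Fin d) := I - (inner ℝ v I : ℝ) • v with hJ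
    have hJv : (inner ℝ J v : ℝ) = 0 := by
      rw [hJ, inner_sub_left, real_inner_smul_left, real_inner_self_eq_norm_sq, hv,
        real_inner_comm]
      ring
    have hJI := horth J hJv
    have hJJ : (inner ℝ J J : ℝ) = 0 := by
      have h3 : (inner ℝ J ((inner ℝ v I : ℝ) • v) : ℝ) = 0 := by
        rw [real_inner_smul_right, hJv, mul_zero]
      have h4 : (inner ℝ J J : ℝ) = (inner ℝ J I : ℝ) - (inner ℝ J ((inner ℝ v I : ℝ) • v) : ℝ) := by
        conv_lhs => rw [hJ]
        rw [inner_sub_right]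
      rw [h4, h3, sub_zero]
      exact hJI
    have hJ0 : J = 0 := inner_self_eq_zero.mp hJJ
    rw [hJ, sub_eq_zero] at hJ0
    exact hJ0
  -- express m - wbar
  have hsplit : ∫ x in H, x ∂μ = I + (μ H).toReal • wbar := by
    rw [hIdef, integral_sub hint.integrableOn (integrable_const wbar).integrableOn,
      setIntegral_const, measureReal_def]
    abel
  have hmw : m - wbar = (((μ H).toReal)⁻¹ * (inner ℝ v I : ℝ)) • v := by
    rw [hm, hsplit, smul_add, smul_smul, inv_mul_cancel₀ hc.ne', one_smul, add_sub_cancel_right,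
      ← smul_smul, ← hIv]
  have hinner_mw : (inner ℝ v (m - wbar) : ℝ) = ((μ H).toReal)⁻¹ * (inner ℝ v I : ℝ) := by
    rw [hmw, real_inner_smul_right, real_inner_self_eq_norm_sq, hv]
    ring
  -- ⟪v, I⟫ as an integral
  have hgint : Integrable (fun x : EuclideanSpace ℝ (Fin d) => (inner ℝ v (x - wbar) : ℝ)) μ :=
    (innerSL ℝ v).integrable_comp hint'
  have hvI : (inner ℝ v I : ℝ) = ∫ x in H, (inner ℝ v (x - wbar) : ℝ) ∂μ :=
    (integral_inner hint'.integrableOn v).symm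
  have hnonnegH : (0:ℝ) ≤ ∫ x in H, (inner ℝ v (x - wbar) : ℝ) ∂μ := by
    refine setIntegral_nonneg hHmeas fun x hx => ?_
    rw [hH] at hx; exact hx
  have hα : 0 ≤ (inner ℝ v (m - wbar) : ℝ) := by
    rw [hinner_mw, hvI]
    positivity
  refine ⟨⟨?_, hα⟩, ?_⟩
  · rw [hinner_mw, ← hmw]
    abel
  · intro hSpos
    set S : Set (EuclideanSpace ℝ (Fin d)) := {x | 0 < (inner ℝ v (x - wbar) : ℝ)} with hS
    have hSmeas : MeasurableSet S := (isOpen_lt continuous_const hgcont).measurableSet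
    have hSH : S ⊆ H := by
      intro x hx
      have hx' : (0:ℝ) < inner ℝ v (x - wbar) := hx
      rw [hH]
      exact hx'.le
    have hposS : 0 < ∫ x in S, (inner ℝ v (x - wbar) : ℝ) ∂μ := by
      rw [setIntegral_pos_iff_support_of_nonneg_ae ?_ hgint.integrableOn]
      · refine lt_of_lt_of_le hSpos (measure_mono ?_)
        intro x hx
        exact ⟨ne_of_gt hx, hx⟩
      · exact (ae_restrict_iff' hSmeas).2
          (Filter.Eventually.of_forall fun x hx => le_of_lt hx)
    have hmono : (∫ x in S, (inner ℝ v (x - wbar) : ℝ) ∂μ)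
        ≤ ∫ x in H, (inner ℝ v (x - wbar) : ℝ) ∂μ := by
      refine setIntegral_mono_set hgint.integrableOn ?_ (HasSubset.Subset.eventuallyLE hSH)
      refine (ae_restrict_iff' hHmeas).2 (Filter.Eventually.of_forall fun x hx => ?_)
      rw [hH] at hx; exact hx
    rw [hinner_mw, hvI]
    have : 0 < ∫ x in H, (inner ℝ v (x - wbar) : ℝ) ∂μ := lt_of_lt_of_le hposS hmono
    positivity
end

section
/- Let σ > 0 and π₂ ∈ (1/2, 1), and set L = log(π₂/(1 − π₂)) and m = 1 − σ·√(2L). Then L > 0, m < 1, and m satisfies the fixed-point equation m = (1 + m)/2 − (σ²/(1 − m)) · L; equivalently, (1 − m)² = 2σ²L. -/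
open Real

/-- Closed-form fixed point of Proposition F.5: when `π₂ > 1/2`, setting
`L = log(π₂/(1 - π₂))` and `m = 1 - σ√(2L)` gives `L > 0`, `m < 1`, and `m`
satisfies the fixed-point equation `m = (1 + m)/2 - (σ²/(1 - m))·L`,
equivalently `(1 - m)² = 2σ²L`. -/
theorem stmt_16 (σ : ℝ) (hσ : 0 < σ) (π₂ : ℝ)
    (hπ : π₂ ∈ Set.Ioo (1 / 2 : ℝ) 1)
    (L m : ℝ) (hL : L = log (π₂ / (1 - π₂))) (hm : m = 1 - σ * Real.sqrt (2 * L)) :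
    0 < L ∧ m < 1 ∧ m = (1 + m) / 2 - (σ^2 / (1 - m)) * L ∧
      (1 - m)^2 = 2 * σ^2 * L := by
  obtain ⟨h1, h2⟩ := hπ
  have h1' : (1:ℝ) < π₂ / (1 - π₂) := by
    rw [lt_div_iff₀ (by linarith)]; linarith
  have hLpos : 0 < L := by rw [hL]; exact Real.log_pos h1'
  have hs : Real.sqrt (2 * L) > 0 := Real.sqrt_pos.mpr (by linarith)
  have hsq : (1 - m)^2 = 2 * σ^2 * L := by
    rw [hm]
    ring_nf
    rw [Real.sq_sqrt (by linarith : (0:ℝ) ≤ L * 2)]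
    ring
  have hm1 : m < 1 := by nlinarith
  refine ⟨hLpos, hm1, ?_, hsq⟩
  have hne : 1 - m ≠ 0 := by linarith
  field_simp
  nlinarith [hsq]
end

section
/- Let σ > 0 and π₂ ∈ (0, 1/2]. Then for every real number m < 1, (1 + m)/2 − (σ²/(1 − m)) · log(π₂/(1 − π₂)) > m. Consequently, no m < 1 satisfies the fixed-point equation m = (1 + m)/2 − (σ²/(1 − m)) · log(π₂/(1 − π₂)). -/
open Real

/-- Nonexistence part of Proposition F.5: when `π₂ ≤ 1/2`, for every `m < 1`
the balancing interpretation `t*(m) = (1 + m)/2 - (σ²/(1 - m))·log(π₂/(1 - π₂))`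
strictly exceeds `m`, so no `m < 1` satisfies the fixed-point equation. -/
theorem stmt_17 (σ : ℝ) (hσ : 0 < σ) (π₂ : ℝ)
    (hπ : π₂ ∈ Set.Ioc (0 : ℝ) (1 / 2)) :
    (∀ m : ℝ, m < 1 →
      (1 + m) / 2 - (σ^2 / (1 - m)) * log (π₂ / (1 - π₂)) > m) ∧
    ¬∃ m : ℝ, m < 1 ∧
      m = (1 + m) / 2 - (σ^2 / (1 - m)) * log (π₂ / (1 - π₂)) := by
  obtain ⟨hπ0, hπ2⟩ := hπ
  have hlog : log (π₂ / (1 - π₂)) ≤ 0 := by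
    apply Real.log_nonpos
    · exact div_nonneg hπ0.le (by linarith)
    · rw [div_le_one (by linarith)]; linarith
  have main : ∀ m : ℝ, m < 1 →
      (1 + m) / 2 - (σ^2 / (1 - m)) * log (π₂ / (1 - π₂)) > m := by
    intro m hm
    have h1 : (0:ℝ) ≤ σ^2 / (1 - m) := div_nonneg (sq_nonneg σ) (by linarith)
    nlinarith [mul_nonpos_of_nonneg_of_nonpos h1 hlog]
  refine ⟨main, ?_⟩
  rintro ⟨m, hm, heq⟩
  exact absurd heq (ne_of_gt (main m hm)).symm
end
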